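/- For every integer n ≥ 2 and every real A > 0 there exists a constant C > 0 such that for all real B ≥ 3, the number of n-tuples (t₁,…,tₙ) of integers with 1 ≤ |t_i| ≤ B for all i, for which there exist indices i ≠ j with gcd(t_i, t_j) > (log B)^A, is at most C · Bⁿ / (log B)^A. -/

import Mathlib

open Finset

private lemma aux_le_toNat (d : ℕ) (M : ℤ) (h : (d:ℤ) ≤ M) : d ≤ M.toNat := by omega

private lemma aux_of_toNat (d : ℕ) (M : ℤ) (h : d ≤ M.toNat) (h0 : 0 < M) : (d:ℤ) ≤ M := by
  omega

private lemma aux_two_add (n : ℕ) (hn : 2 ≤ n) : 2 + (n - 2) = n := by omega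

private lemma mult_card_le (M : ℤ) (d : ℕ) (hd : 0 < d) :
    ((Finset.Icc (-M) M).filter (fun x => (d:ℤ) ∣ x)).card
      ≤ (Finset.Icc (-(M / (d:ℤ))) (M / (d:ℤ))).card := by
  have hd0 : (0:ℤ) < d := by exact_mod_cast hd
  apply Finset.card_le_card_of_injOn (fun x => x / (d:ℤ))
  · intro x hx
    simp only [Finset.mem_coe, Finset.mem_filter, Finset.mem_Icc] at hx ⊢
    obtain ⟨⟨h1, h2⟩, hdvd⟩ := hx
    have habs : |x / (d:ℤ)| ≤ M / (d:ℤ) := by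
      rw [Int.le_ediv_iff_mul_le hd0]
      calc |x / (d:ℤ)| * d = |x / (d:ℤ)| * |(d:ℤ)| := by rw [abs_of_pos hd0]
        _ = |x / (d:ℤ) * d| := (abs_mul _ _).symm
        _ = |x| := by rw [Int.ediv_mul_cancel hdvd]
        _ ≤ M := abs_le.mpr ⟨h1, h2⟩
    exact abs_le.mp habs
  · intro x hx y hy hxy
    simp only [Finset.mem_coe, Finset.mem_filter] at hx hy
    have := congrArg (· * (d:ℤ)) hxy
    simpa [Int.ediv_mul_cancel hx.2, Int.ediv_mul_cancel hy.2] using this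

private lemma count_aux {n : ℕ} (M : ℤ) (d : ℕ) {i j : Fin n} (hij : i ≠ j) :
    ((Fintype.piFinset fun _ : Fin n => Finset.Icc (-M) M).filter
      (fun t => (d:ℤ) ∣ t i ∧ (d:ℤ) ∣ t j)).card
    ≤ ((Finset.Icc (-M) M).filter (fun x => (d:ℤ) ∣ x)).card ^ 2
        * (Finset.Icc (-M) M).card ^ (n - 2) := by
  classical
  set Box := Finset.Icc (-M) M with hBox
  set Mu := Box.filter (fun x => (d:ℤ) ∣ x) with hMu
  have hsub : (Fintype.piFinset fun _ : Fin n => Box).filter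
      (fun t => (d:ℤ) ∣ t i ∧ (d:ℤ) ∣ t j)
      ⊆ Fintype.piFinset (fun k => if k = i ∨ k = j then Mu else Box) := by
    intro t ht
    simp only [Finset.mem_filter, Fintype.mem_piFinset] at ht
    rw [Fintype.mem_piFinset]
    intro k
    by_cases hk : k = i ∨ k = j
    · rw [if_pos hk, hMu, Finset.mem_filter]
      refine ⟨ht.1 k, ?_⟩
      rcases hk with rfl | rfl
      · exact ht.2.1
      · exact ht.2.2
    · rw [if_neg hk]; exact ht.1 k
  refine (Finset.card_le_card hsub).trans ?_
  rw [Fintype.card_piFinset]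
  have hsplit := Finset.prod_sdiff (f := fun k => (if k = i ∨ k = j then Mu else Box).card)
    (Finset.subset_univ ({i, j} : Finset (Fin n)))
  rw [← hsplit]
  have h1 : ∏ k ∈ ({i,j} : Finset (Fin n)), (if k = i ∨ k = j then Mu else Box).card
      = Mu.card ^ 2 := by
    rw [Finset.prod_pair hij]
    simp [sq]
  have h2 : ∏ k ∈ univ \ ({i,j} : Finset (Fin n)), (if k = i ∨ k = j then Mu else Box).card
      = Box.card ^ (n - 2) := by
    rw [Finset.prod_congr rfl (fun k hk => ?_), Finset.prod_const]
    · congr 1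
      rw [Finset.card_sdiff_of_subset (Finset.subset_univ _), Finset.card_pair hij, Finset.card_univ,
        Fintype.card_fin]
    · simp only [Finset.mem_sdiff, Finset.mem_insert, Finset.mem_singleton] at hk
      rw [if_neg (by tauto)]
  rw [h1, h2, mul_comm]

theorem stmt_3 (n : ℕ) (hn : 2 ≤ n) (A : ℝ) (hA : 0 < A) :
    ∃ C : ℝ, 0 < C ∧ ∀ B : ℝ, 3 ≤ B →
      (Set.ncard {t : Fin n → ℤ |
          (∀ i, 1 ≤ |t i| ∧ (|t i| : ℝ) ≤ B) ∧
          ∃ i j : Fin n, i ≠ j ∧ (Real.log B) ^ A < (Int.gcd (t i) (t j) : ℝ)} : ℝ)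
        ≤ C * B ^ n / (Real.log B) ^ A := by
  classical
  have hn0 : (0:ℝ) < n := by exact_mod_cast (by omega : 0 < n)
  refine ⟨2 * n^2 * 3^n, by positivity, fun B hB => ?_⟩
  have hB0 : (0:ℝ) < B := by linarith
  have hlogB : 1 < Real.log B := by
    have h3 : (1:ℝ) < Real.log 3 := by
      rw [Real.lt_log_iff_exp_lt (by norm_num : (0:ℝ) < 3)]
      calc Real.exp 1 < 2.7182818286 := Real.exp_one_lt_d9
        _ < 3 := by norm_num
    have := Real.log_le_log (by norm_num : (0:ℝ) < 3) hB
    linarith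
  obtain ⟨L, hLdef⟩ : ∃ L : ℝ, L = Real.log B ^ A := ⟨_, rfl⟩
  simp only [← hLdef]
  have hL1 : 1 ≤ L := hLdef ▸ Real.one_le_rpow hlogB.le hA.le
  have hL0 : 0 < L := by linarith
  obtain ⟨K, hKdef⟩ : ∃ k : ℕ, k = ⌊L⌋₊ := ⟨_, rfl⟩
  have hK1 : 1 ≤ K := by
    rw [hKdef]; exact Nat.le_floor (by exact_mod_cast hL1)
  have hK0 : (0:ℝ) < K := by exact_mod_cast hK1
  have hLK : L < K + 1 := by
    rw [hKdef]; exact_mod_cast Nat.lt_floor_add_one L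
  have hL2K : L ≤ 2 * K := by
    have : (1:ℝ) ≤ K := by exact_mod_cast hK1
    linarith
  obtain ⟨M, hMdef⟩ : ∃ m : ℤ, m = ⌊B⌋ := ⟨_, rfl⟩
  have hM3 : (3:ℤ) ≤ M := by
    rw [hMdef]; exact Int.le_floor.mpr (by exact_mod_cast hB)
  have hMB : (M:ℝ) ≤ B := by rw [hMdef]; exact Int.floor_le B
  have hM0 : (0:ℤ) < M := by linarith
  obtain ⟨Box, hBox⟩ : ∃ s : Finset ℤ, s = Finset.Icc (-M) M := ⟨_, rfl⟩
  obtain ⟨F, hF⟩ : ∃ s : Finset (Fin n → ℤ), s = Fintype.piFinset fun _ : Fin n => Box :=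
    ⟨_, rfl⟩
  obtain ⟨G, hG⟩ : ∃ s : Finset (Fin n → ℤ),
      s = F.filter (fun t => (∀ i, 1 ≤ |t i| ∧ (|(t i : ℝ)| : ℝ) ≤ B) ∧
        ∃ i j : Fin n, i ≠ j ∧ L < (Int.gcd (t i) (t j) : ℝ)) := ⟨_, rfl⟩
  -- Step 1: the set is contained in G
  have hsubG : {t : Fin n → ℤ |
      (∀ i, 1 ≤ |t i| ∧ (|(t i : ℝ)| : ℝ) ≤ B) ∧
      ∃ i j : Fin n, i ≠ j ∧ L < (Int.gcd (t i) (t j) : ℝ)} ⊆ ↑G := by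
    intro t ht
    obtain ⟨h1, h2⟩ := ht
    simp only [hG, Finset.coe_filter, Set.mem_setOf_eq]
    refine ⟨?_, h1, h2⟩
    rw [hF, Fintype.mem_piFinset]
    intro k
    rw [hBox, Finset.mem_Icc, ← abs_le]
    have h2k := (h1 k).2
    rw [← Int.cast_abs] at h2k
    rw [hMdef]
    exact Int.le_floor.mpr h2k
  have hcard1 : (Set.ncard {t : Fin n → ℤ |
      (∀ i, 1 ≤ |t i| ∧ (|(t i : ℝ)| : ℝ) ≤ B) ∧
      ∃ i j : Fin n, i ≠ j ∧ L < (Int.gcd (t i) (t j) : ℝ)}) ≤ G.card := by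
    have := Set.ncard_le_ncard hsubG (Finset.finite_toSet G)
    rwa [Set.ncard_coe_finset] at this
  -- Step 2: G is covered by the biUnion over pairs and divisors
  obtain ⟨H, hH⟩ : ∃ f : Fin n × Fin n → ℕ → Finset (Fin n → ℤ),
      f = fun (p : Fin n × Fin n) (d : ℕ) => F.filter (fun t => p.1 ≠ p.2 ∧ (d:ℤ) ∣ t p.1 ∧ (d:ℤ) ∣ t p.2) :=
    ⟨_, rfl⟩
  have hsubH : G ⊆ (univ : Finset (Fin n × Fin n)).biUnion
      (fun p => (Finset.Ioc K M.toNat).biUnion (fun d => H p d)) := by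
    intro t ht
    simp only [hG, Finset.mem_filter] at ht
    obtain ⟨htF, h1, i, j, hij, hgcd⟩ := ht
    rw [Finset.mem_biUnion]
    refine ⟨(i, j), Finset.mem_univ _, ?_⟩
    rw [Finset.mem_biUnion]
    refine ⟨Int.gcd (t i) (t j), ?_, ?_⟩
    · have hti : t i ≠ 0 := by
        intro h0
        have := (h1 i).1
        rw [h0] at this
        simp at this
      have hdM : (Int.gcd (t i) (t j) : ℤ) ≤ M := by
        have hdvd : (Int.gcd (t i) (t j) : ℤ) ∣ |t i| := (dvd_abs _ _).mpr (Int.gcd_dvd_left _ _)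
        have habs : |t i| ≤ M := by
          have h2i := (h1 i).2
          rw [← Int.cast_abs] at h2i
          rw [hMdef]
          exact Int.le_floor.mpr h2i
        exact le_trans (Int.le_of_dvd (abs_pos.mpr hti) hdvd) habs
      rw [Finset.mem_Ioc]
      constructor
      · rw [hKdef]
        exact (Nat.floor_lt hL0.le).mpr hgcd
      · exact aux_le_toNat _ _ hdM
    · simp only [hH, Finset.mem_filter]
      exact ⟨htF, hij, Int.gcd_dvd_left _ _, Int.gcd_dvd_right _ _⟩
  have hcard2 : G.card ≤ ∑ p : Fin n × Fin n, ∑ d ∈ Finset.Ioc K M.toNat, (H p d).card := by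
    refine (Finset.card_le_card hsubH).trans ?_
    refine (Finset.card_biUnion_le).trans ?_
    exact Finset.sum_le_sum fun p _ => Finset.card_biUnion_le
  -- Step 3: bound each (H p d).card in ℝ
  have hterm : ∀ p : Fin n × Fin n, ∀ d ∈ Finset.Ioc K M.toNat,
      ((H p d).card : ℝ) ≤ (3*B)^2 * ((d:ℝ)^2)⁻¹ * (3*B)^(n-2) := by
    intro p d hdmem
    rw [Finset.mem_Ioc] at hdmem
    have hd1 : 1 ≤ d := hK1.trans hdmem.1.le
    have hd0 : (0:ℝ) < d := by exact_mod_cast hd1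
    have hdM : (d:ℤ) ≤ M := aux_of_toNat _ _ hdmem.2 hM0
    by_cases hij : p.1 = p.2
    · have : H p d = ∅ := by
        simp only [hH]
        refine Finset.filter_false_of_mem fun t _ => ?_
        simp [hij]
      rw [this]
      simp only [Finset.card_empty, Nat.cast_zero]
      positivity
    · have hcount := count_aux (n := n) M d (i := p.1) (j := p.2) hij
      have hHeq : H p d ⊆ (Fintype.piFinset fun _ : Fin n => Finset.Icc (-M) M).filter
          (fun t => (d:ℤ) ∣ t p.1 ∧ (d:ℤ) ∣ t p.2) := by
        intro t ht
        simp only [hH, Finset.mem_filter] at ht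
        rw [Finset.mem_filter]
        refine ⟨?_, ht.2.2⟩
        have := ht.1
        rw [hF] at this
        rw [Fintype.mem_piFinset] at this ⊢
        intro k
        have := this k
        rwa [hBox] at this
      have hc : (H p d).card ≤ ((Finset.Icc (-M) M).filter (fun x => (d:ℤ) ∣ x)).card ^ 2
          * (Finset.Icc (-M) M).card ^ (n - 2) :=
        (Finset.card_le_card hHeq).trans hcount
      -- bound the multiples card
      have hdz : (0:ℤ) < (d:ℤ) := by exact_mod_cast hd0
      obtain ⟨q, hq⟩ : ∃ q : ℤ, q = M / (d:ℤ) := ⟨_, rfl⟩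
      have hq1 : 1 ≤ q := by
        rw [hq, Int.le_ediv_iff_mul_le hdz, one_mul]
        exact hdM
      have hqd : q * d ≤ M := by
        rw [hq]; exact Int.ediv_mul_le M (by positivity)
      have hqR : (q:ℝ) ≤ B / d := by
        rw [le_div_iff₀ hd0]
        have : ((q * d : ℤ) : ℝ) ≤ (M:ℝ) := by exact_mod_cast hqd
        push_cast at this
        linarith
      have hmult : (((Finset.Icc (-M) M).filter (fun x => (d:ℤ) ∣ x)).card : ℝ)
          ≤ 3 * B / d := by
        have h1 := mult_card_le M d hd1
        rw [← hq] at h1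
        have h2 : ((Finset.Icc (-q) q).card : ℝ) = 2 * q + 1 := by
          rw [Int.card_Icc]
          have h3 : ((q + 1 - -q).toNat : ℤ) = 2 * q + 1 := by
            rw [Int.toNat_of_nonneg (by linarith)]
            ring
          have h4 := congrArg (fun z : ℤ => (z : ℝ)) h3
          push_cast at h4
          linarith [h4]
        have h3 : (((Finset.Icc (-M) M).filter (fun x => (d:ℤ) ∣ x)).card : ℝ)
            ≤ ((Finset.Icc (-q) q).card : ℝ) := by exact_mod_cast h1
        have hq1R : (1:ℝ) ≤ q := by exact_mod_cast hq1
        calc (((Finset.Icc (-M) M).filter (fun x => (d:ℤ) ∣ x)).card : ℝ)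
            ≤ 2 * q + 1 := by rw [← h2]; exact h3
          _ ≤ 3 * (q:ℝ) := by linarith
          _ ≤ 3 * (B / d) := by linarith [hqR]
          _ = 3 * B / d := by ring
      have hbox : ((Finset.Icc (-M) M).card : ℝ) ≤ 3 * B := by
        rw [Int.card_Icc]
        have h3 : ((M + 1 - -M).toNat : ℤ) = 2 * M + 1 := by
          rw [Int.toNat_of_nonneg (by linarith)]
          ring
        have h := congrArg (fun z : ℤ => (z : ℝ)) h3
        push_cast at h
        have hM1 : (1:ℝ) ≤ M := by exact_mod_cast (by linarith : (1:ℤ) ≤ M)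
        calc ((M + 1 - -M).toNat : ℝ) = 2 * (M:ℝ) + 1 := by linarith [h]
          _ ≤ 3 * (M:ℝ) := by linarith
          _ ≤ 3 * B := by linarith
      have hcast : ((H p d).card : ℝ)
          ≤ (((Finset.Icc (-M) M).filter (fun x => (d:ℤ) ∣ x)).card : ℝ) ^ 2
          * ((Finset.Icc (-M) M).card : ℝ) ^ (n-2) := by exact_mod_cast hc
      have hnn1 : (0:ℝ) ≤ (((Finset.Icc (-M) M).filter (fun x => (d:ℤ) ∣ x)).card : ℝ) :=
        Nat.cast_nonneg _
      have hp1 : (((Finset.Icc (-M) M).filter (fun x => (d:ℤ) ∣ x)).card : ℝ) ^ 2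
          ≤ (3*B/d)^2 := pow_le_pow_left₀ hnn1 hmult 2
      have hp2 : ((Finset.Icc (-M) M).card : ℝ) ^ (n-2) ≤ (3*B)^(n-2) :=
        pow_le_pow_left₀ (Nat.cast_nonneg _) hbox (n-2)
      have hcR : ((H p d).card : ℝ) ≤ (3*B/d)^2 * (3*B)^(n-2) :=
        hcast.trans (mul_le_mul hp1 hp2 (by positivity) (by positivity))
      calc ((H p d).card : ℝ) ≤ (3*B/d)^2 * (3*B)^(n-2) := hcR
        _ = (3*B)^2 * ((d:ℝ)^2)⁻¹ * (3*B)^(n-2) := by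
            rw [div_pow]
            ring
  -- Step 4: sum the bounds
  have hsum1 : (∑ p : Fin n × Fin n, ∑ d ∈ Finset.Ioc K M.toNat, ((H p d).card : ℝ))
      ≤ ∑ p : Fin n × Fin n, ∑ d ∈ Finset.Ioc K M.toNat,
          (3*B)^2 * ((d:ℝ)^2)⁻¹ * (3*B)^(n-2) :=
    Finset.sum_le_sum fun p _ => Finset.sum_le_sum fun d hd => hterm p d hd
  have hsum2 : (∑ d ∈ Finset.Ioc K M.toNat, ((d:ℝ)^2)⁻¹) ≤ (K:ℝ)⁻¹ := by
    rcases le_or_gt K M.toNat with h | h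
    · have h5 := sum_Ioc_inv_sq_le_sub (α := ℝ) (k := K) (n := M.toNat) (Nat.one_le_iff_ne_zero.mp hK1) h
      have hMn : (0:ℝ) ≤ ((M.toNat : ℝ))⁻¹ := by positivity
      linarith
    · rw [Finset.Ioc_eq_empty (not_lt.mpr h.le)]
      simp only [Finset.sum_empty]
      positivity
  have hKL : (K:ℝ)⁻¹ ≤ 2 / L := by
    rw [inv_eq_one_div, div_le_div_iff₀ hK0 hL0]
    linarith
  -- put it together
  have hchain : (Set.ncard {t : Fin n → ℤ |
      (∀ i, 1 ≤ |t i| ∧ (|(t i : ℝ)| : ℝ) ≤ B) ∧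
      ∃ i j : Fin n, i ≠ j ∧ L < (Int.gcd (t i) (t j) : ℝ)} : ℝ)
      ≤ (n:ℝ)^2 * ((3*B)^2 * (3*B)^(n-2) * (2 / L)) := by
    have hc12 : (Set.ncard {t : Fin n → ℤ |
        (∀ i, 1 ≤ |t i| ∧ (|(t i : ℝ)| : ℝ) ≤ B) ∧
        ∃ i j : Fin n, i ≠ j ∧ L < (Int.gcd (t i) (t j) : ℝ)} : ℝ)
        ≤ ∑ p : Fin n × Fin n, ∑ d ∈ Finset.Ioc K M.toNat, ((H p d).card : ℝ) := by
      have hG1 : (Set.ncard {t : Fin n → ℤ |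
          (∀ i, 1 ≤ |t i| ∧ (|(t i : ℝ)| : ℝ) ≤ B) ∧
          ∃ i j : Fin n, i ≠ j ∧ L < (Int.gcd (t i) (t j) : ℝ)} : ℝ) ≤ (G.card : ℝ) := by
        exact_mod_cast hcard1
      refine hG1.trans ?_
      have hcast : ((G.card : ℕ) : ℝ) ≤
          ((∑ p : Fin n × Fin n, ∑ d ∈ Finset.Ioc K M.toNat, (H p d).card : ℕ) : ℝ) := by
        exact_mod_cast hcard2
      refine hcast.trans ?_
      rw [Nat.cast_sum]
      refine le_of_eq (Finset.sum_congr rfl fun p _ => ?_)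
      rw [Nat.cast_sum]
    refine (hc12.trans hsum1).trans ?_
    have hinner : ∀ p : Fin n × Fin n,
        (∑ d ∈ Finset.Ioc K M.toNat, (3*B)^2 * ((d:ℝ)^2)⁻¹ * (3*B)^(n-2))
        ≤ (3*B)^2 * (3*B)^(n-2) * (2 / L) := by
      intro p
      have heq : (∑ d ∈ Finset.Ioc K M.toNat, (3*B)^2 * ((d:ℝ)^2)⁻¹ * (3*B)^(n-2))
          = (3*B)^2 * (3*B)^(n-2) * (∑ d ∈ Finset.Ioc K M.toNat, ((d:ℝ)^2)⁻¹) := by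
        rw [Finset.mul_sum]
        refine Finset.sum_congr rfl fun d _ => by ring
      rw [heq]
      have h2L : (∑ d ∈ Finset.Ioc K M.toNat, ((d:ℝ)^2)⁻¹) ≤ 2 / L := hsum2.trans hKL
      have hpos : (0:ℝ) ≤ (3*B)^2 * (3*B)^(n-2) := by positivity
      exact mul_le_mul_of_nonneg_left h2L hpos
    calc (∑ p : Fin n × Fin n, ∑ d ∈ Finset.Ioc K M.toNat,
            (3*B)^2 * ((d:ℝ)^2)⁻¹ * (3*B)^(n-2))
        ≤ ∑ _p : Fin n × Fin n, (3*B)^2 * (3*B)^(n-2) * (2 / L) :=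
          Finset.sum_le_sum fun p _ => hinner p
      _ = (n:ℝ)^2 * ((3*B)^2 * (3*B)^(n-2) * (2 / L)) := by
          rw [Finset.sum_const, Finset.card_univ, Fintype.card_prod, Fintype.card_fin,
            nsmul_eq_mul]
          push_cast
          ring
  refine hchain.trans (le_of_eq ?_)
  have hpow : (3*B)^2 * (3*B)^(n-2) = (3*B)^n := by
    rw [← pow_add]
    congr 1
    exact aux_two_add n hn
  rw [hpow, mul_pow]
  field_simp
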